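/- For integers p ≥ 2 and 1 ≤ k ≤ p−1, let H_k = {β ∈ {−1,0,+1}^{p−1} : ‖β‖₀ = k}. There exists a subset H̃_k ⊆ H_k with cardinality |H̃_k| ≥ exp((k/2)·log((p − k/2 − 1)/k)) such that the Hamming distance ρ_H(β, β′) = |{j : β_j ≠ β′_j}| is at least k/2 for every pair of distinct β, β′ ∈ H̃_k. -/

import Mathlib

open scoped BigOperators
open Finset

set_option maxHeartbeats 1000000

private lemma two_mul_le_two_pow : ∀ t : ℕ, 2*t ≤ 2^t := by
  intro t
  induction t with
  | zero => simp
  | succ t ih =>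
    rcases Nat.eq_zero_or_pos t with h | h
    · subst h; norm_num
    · have : (1:ℕ) ≤ 2^t := Nat.one_le_two_pow
      have h2 : 2*t ≥ 2 := by omega
      rw [pow_succ]; omega

private lemma pack_pow (k : ℕ) : (k-1)/2 + 1 ≤ 2 ^ ((3*k-2)/4 + 1 - (k-1)/2) := by
  have h1 : (k-1)/2 + 1 ≤ 2 * ((3*k-2)/4 + 1 - (k-1)/2) := by omega
  exact le_trans h1 (two_mul_le_two_pow _)

private lemma choose_mono_half {n a b : ℕ} (hab : a ≤ b) (hb : 2*b ≤ n) :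
    n.choose a ≤ n.choose b := by
  induction b, hab using Nat.le_induction with
  | base => exact le_refl _
  | succ b hab ih =>
    exact le_trans (ih (by omega)) (Nat.choose_le_succ_of_lt_half_left (by omega))

private lemma prod_phi {n : ℕ} (r : ℕ) : ∀ k, r ≤ k → k ≤ n →
    (2:ℝ)^r * (n.choose r) * (∏ d ∈ Ico r k, 2*((n:ℝ)-d)/(d+1)) = 2^k * n.choose k := by
  intro k hrk
  induction k, hrk using Nat.le_induction with
  | base => intro _; simp
  | succ k hrk ih =>
    intro hkn
    have hkn' : k ≤ n := by omega
    have hkn'' : k < n := by omega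
    rw [Finset.prod_Ico_succ_top hrk, ← mul_assoc, ih hkn']
    have hc := Nat.choose_succ_right_eq n k
    have hc' : ((n.choose (k+1)):ℝ) * ((k:ℝ)+1) = (n.choose k : ℝ) * ((n:ℝ)-(k:ℝ)) := by
      have h2 := congrArg (Nat.cast (R := ℝ)) hc
      push_cast [Nat.cast_sub hkn'] at h2
      linarith [h2]
    have hk1 : ((k:ℝ)+1) ≠ 0 := by positivity
    rw [pow_succ]
    field_simp
    linear_combination (-1:ℝ) * hc'

private lemma key_numeric {n k : ℕ} (hk : 1 ≤ k) (hkn : k ≤ n) (h3 : 3*k + 1 ≤ 2*n) :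
    Real.exp (((k:ℝ)/2) * Real.log (((n:ℝ) - (k:ℝ)/2)/(k:ℝ))) *
      (∑ d ∈ range ((k-1)/2 + 1), ((n.choose d : ℝ) * 2^d))
    ≤ 2^k * (n.choose k : ℝ) := by
  set r : ℕ := (k-1)/2 with hr
  set e : ℕ := (3*k-2)/4 with he
  set x : ℝ := ((n:ℝ) - (k:ℝ)/2)/(k:ℝ) with hxdef
  have hk0 : (0:ℝ) < k := by exact_mod_cast hk
  have hn3 : (3:ℝ)*k + 1 ≤ 2*n := by exact_mod_cast h3
  have hx1 : 1 < x := by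
    rw [hxdef, lt_div_iff₀ hk0]; linarith
  have hx0 : (0:ℝ) < x := by linarith
  set N : ℝ := Real.exp (((k:ℝ)/2) * Real.log x) with hN
  have hNpos : 0 < N := Real.exp_pos _
  have hN2 : N^2 = x^k := by
    rw [hN, ← Real.exp_nat_mul]
    have : (2:ℝ) * ((k:ℝ)/2 * Real.log x) = (k:ℝ) * Real.log x := by ring
    rw [show ((2:ℕ):ℝ) = (2:ℝ) by norm_num, this, Real.exp_nat_mul, Real.exp_log hx0]
  set V : ℝ := ∑ d ∈ range (r + 1), ((n.choose d : ℝ) * 2^d) with hV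
  have hVnonneg : 0 ≤ V := by
    apply Finset.sum_nonneg; intro i _; positivity
  have hVle : V ≤ ((r:ℝ)+1) * (n.choose r * 2^r) := by
    have hnat : ∑ d ∈ range (r + 1), (n.choose d * 2^d) ≤ (r+1) * (n.choose r * 2^r) := by
      have := Finset.sum_le_card_nsmul (range (r+1)) (fun d => n.choose d * 2^d)
        (n.choose r * 2^r) (by
          intro d hd
          rw [Finset.mem_range] at hd
          have hd' : d ≤ r := by omega
          exact Nat.mul_le_mul (choose_mono_half hd' (by omega)) (Nat.pow_le_pow_right (by norm_num) hd'))
      simpa using this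
    calc V = ((∑ d ∈ range (r + 1), (n.choose d * 2^d) : ℕ) : ℝ) := by push_cast [hV]; ring_nf
    _ ≤ (((r+1) * (n.choose r * 2^r) : ℕ) : ℝ) := by exact_mod_cast hnat
    _ = ((r:ℝ)+1) * (n.choose r * 2^r) := by push_cast; ring
  set Φ : ℝ := ∏ d ∈ Ico r k, 2*((n:ℝ)-(d:ℝ))/((d:ℝ)+1) with hPhi
  have hre : r ≤ e := by omega
  have hek : e + 1 ≤ k := by omega
  have hid : (2:ℝ)^r * (n.choose r) * Φ = 2^k * n.choose k :=
    prod_phi r k (by omega) hkn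
  -- lower bound Φ
  have hsplit : (∏ d ∈ Ico r (e+1), 2*((n:ℝ)-(d:ℝ))/((d:ℝ)+1)) *
      (∏ d ∈ Ico (e+1) k, 2*((n:ℝ)-(d:ℝ))/((d:ℝ)+1)) = Φ :=
    Finset.prod_Ico_consecutive _ (by omega) hek
  have hlow1 : (2*x)^(e+1-r) ≤ ∏ d ∈ Ico r (e+1), 2*((n:ℝ)-(d:ℝ))/((d:ℝ)+1) := by
    rw [show e+1-r = (Ico r (e+1)).card from by rw [Nat.card_Ico], ← Finset.prod_const]
    apply Finset.prod_le_prod (fun i _ => by positivity)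
    intro d hd
    rw [Finset.mem_Ico] at hd
    have hd1 : 4*d ≤ 3*k - 2 := by omega
    have hd1' : (4:ℝ)*d ≤ 3*k - 2 := by
      have : (4*d:ℕ) ≤ (3*k-2:ℕ) := hd1
      have h32 : ((3*k-2:ℕ):ℝ) = 3*(k:ℝ)-2 := by
        have : 2 ≤ 3*k := by omega
        push_cast [Nat.cast_sub this]; ring
      exact_mod_cast h32 ▸ (Nat.cast_le.mpr hd1)
    have hd2 : (d:ℝ) ≤ (k:ℝ) - 1 := by
      have : d ≤ k - 1 := by omega
      have hk1 : ((k-1:ℕ):ℝ) = (k:ℝ)-1 := by push_cast [Nat.cast_sub hk]; ring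
      exact hk1 ▸ (Nat.cast_le.mpr this)
    have hd0 : (0:ℝ) < (d:ℝ) + 1 := by positivity
    rw [hxdef]
    rw [show (2:ℝ) * (((n:ℝ) - (k:ℝ)/2)/(k:ℝ)) = (2*(n:ℝ) - (k:ℝ))/(k:ℝ) by field_simp]
    rw [div_le_div_iff₀ hk0 hd0]
    nlinarith [mul_nonneg hk0.le (by linarith : (0:ℝ) ≤ 3*(k:ℝ) - 4*d - 2),
               mul_nonneg (by linarith : (0:ℝ) ≤ (k:ℝ) - 1 - d) (by linarith : (0:ℝ) ≤ 2*(n:ℝ) - 3*k - 1)]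
  have hlow2 : x^(k-(e+1)) ≤ ∏ d ∈ Ico (e+1) k, 2*((n:ℝ)-(d:ℝ))/((d:ℝ)+1) := by
    rw [show k-(e+1) = (Ico (e+1) k).card from by rw [Nat.card_Ico], ← Finset.prod_const]
    apply Finset.prod_le_prod (fun i _ => by positivity)
    intro d hd
    rw [Finset.mem_Ico] at hd
    have hd2 : (d:ℝ) ≤ (k:ℝ) - 1 := by
      have : d ≤ k - 1 := by omega
      have hk1 : ((k-1:ℕ):ℝ) = (k:ℝ)-1 := by push_cast [Nat.cast_sub hk]; ring
      exact hk1 ▸ (Nat.cast_le.mpr this)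
    have hd0 : (0:ℝ) < (d:ℝ) + 1 := by positivity
    have hnk : (k:ℝ) ≤ (n:ℝ) := by exact_mod_cast hkn
    rw [hxdef, div_le_div_iff₀ hk0 hd0]
    nlinarith [mul_nonneg hk0.le (by linarith : (0:ℝ) ≤ 2*(n:ℝ) - 3*k - 1),
               mul_nonneg (by linarith : (0:ℝ) ≤ (k:ℝ) - 1 - d) (by linarith : (0:ℝ) ≤ (n:ℝ) - k),
               mul_nonneg (by linarith : (0:ℝ) ≤ (k:ℝ) - 1 - d) hk0.le]
  have hPhiLow : (2:ℝ)^(e+1-r) * x^(k-r) ≤ Φ := by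
    rw [← hsplit]
    have hp1nn : (0:ℝ) ≤ ∏ d ∈ Ico r (e+1), 2*((n:ℝ)-(d:ℝ))/((d:ℝ)+1) :=
      le_trans (by positivity) hlow1
    have h1 : (2*x)^(e+1-r) * x^(k-(e+1)) ≤
        (∏ d ∈ Ico r (e+1), 2*((n:ℝ)-(d:ℝ))/((d:ℝ)+1)) *
        (∏ d ∈ Ico (e+1) k, 2*((n:ℝ)-(d:ℝ))/((d:ℝ)+1)) :=
      mul_le_mul hlow1 hlow2 (pow_nonneg hx0.le _) hp1nn
    have hexp : (e+1-r) + (k-(e+1)) = k - r := by omega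
    calc (2:ℝ)^(e+1-r) * x^(k-r) = (2*x)^(e+1-r) * x^(k-(e+1)) := by
          rw [mul_pow, mul_assoc, ← pow_add, hexp]
      _ ≤ _ := h1
  have hPack : ((r:ℝ)+1) ≤ 2^(e+1-r) := by
    have h := pack_pow k
    have : r + 1 ≤ 2^(e+1-r) := by
      have he' : (3*k-2)/4 + 1 - (k-1)/2 = e + 1 - r := by omega
      rw [← he']; exact h
    exact_mod_cast this
  -- combine: (N*V)^2 ≤ (2^k * C)^2
  have hsq : (N*V)^2 ≤ (2^k * (n.choose k : ℝ))^2 := by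
    have hCr : (0:ℝ) ≤ (n.choose r : ℝ) := by positivity
    have step1 : (N*V)^2 ≤ x^k * (((r:ℝ)+1) * (n.choose r * 2^r))^2 := by
      rw [mul_pow, hN2]
      apply mul_le_mul_of_nonneg_left _ (by positivity)
      apply pow_le_pow_left₀ hVnonneg hVle
    have step2 : x^k * (((r:ℝ)+1) * (n.choose r * 2^r))^2 ≤
        (Φ * (n.choose r * 2^r))^2 := by
      have hxk : x^k ≤ x^(2*(k-r)) := pow_le_pow_right₀ hx1.le (by omega)
      have hr2 : (((r:ℝ)+1))^2 ≤ (2^(e+1-r))^2 := pow_le_pow_left₀ (by positivity) hPack 2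
      calc x^k * (((r:ℝ)+1) * (n.choose r * 2^r))^2
          = (((r:ℝ)+1))^2 * (x^k * (n.choose r * 2^r)^2) := by ring
        _ ≤ (2^(e+1-r))^2 * (x^(2*(k-r)) * (n.choose r * 2^r)^2) := by
            apply mul_le_mul (by exact hr2) _ (by positivity) (by positivity)
            apply mul_le_mul_of_nonneg_right hxk (by positivity)
        _ = ((2:ℝ)^(e+1-r) * x^(k-r))^2 * (n.choose r * 2^r)^2 := by
            rw [mul_pow, ← pow_mul]
            ring_nf
        _ ≤ Φ^2 * (n.choose r * 2^r)^2 := by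
            apply mul_le_mul_of_nonneg_right _ (by positivity)
            exact pow_le_pow_left₀ (by positivity) hPhiLow 2
        _ = (Φ * (n.choose r * 2^r))^2 := by ring
    have step3 : (Φ * ((n.choose r : ℝ) * 2^r))^2 = (2^k * (n.choose k : ℝ))^2 := by
      rw [← hid]; ring
    calc (N*V)^2 ≤ _ := step1
      _ ≤ _ := step2
      _ = _ := step3
  have h2k : (0:ℝ) ≤ 2^k * (n.choose k : ℝ) := by positivity
  have hNV : (0:ℝ) ≤ N * V := mul_nonneg hNpos.le hVnonneg
  have hfin := Real.sqrt_le_sqrt hsq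
  rwa [Real.sqrt_sq hNV, Real.sqrt_sq h2k] at hfin

private def iota : Fin 3 → ℤ := ![(-1 : ℤ), 0, 1]

private lemma iota_inj : Function.Injective iota := by decide

private lemma card_pattern {n : ℕ} (D : Finset (Fin n)) (h : Fin n → Fin 3) :
    (Fintype.piFinset fun j => if j ∈ D then ({h j}ᶜ : Finset (Fin 3)) else {h j}).card
      = 2 ^ D.card := by
  rw [Fintype.card_piFinset]
  have hterm : ∀ j, ((if j ∈ D then ({h j}ᶜ : Finset (Fin 3)) else {h j}).card)
      = if j ∈ D then 2 else 1 := by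
    intro j
    split
    · simp [Finset.card_compl]
    · simp
  calc (∏ j, ((if j ∈ D then ({h j}ᶜ : Finset (Fin 3)) else {h j}).card))
      = ∏ j, (if j ∈ D then 2 else 1) := by
        exact Finset.prod_congr rfl (fun j _ => hterm j)
    _ = ∏ j ∈ univ ∩ D, 2 := Finset.prod_ite_mem univ D (fun _ => 2)
    _ = 2 ^ D.card := by rw [Finset.univ_inter, Finset.prod_const]

private lemma ball_bound {n : ℕ} (h : Fin n → Fin 3) (r : ℕ) :
    (univ.filter fun g : Fin n → Fin 3 => hammingDist g h ≤ r).card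
      ≤ ∑ d ∈ range (r+1), n.choose d * 2^d := by
  have hsub : (univ.filter fun g : Fin n → Fin 3 => hammingDist g h ≤ r) ⊆
      (range (r+1)).biUnion (fun d => (univ.powersetCard d).biUnion
        (fun D => Fintype.piFinset fun j => if j ∈ D then ({h j}ᶜ : Finset (Fin 3)) else {h j})) := by
    intro g hg
    simp only [Finset.mem_filter, Finset.mem_univ, true_and] at hg
    refine Finset.mem_biUnion.mpr ⟨hammingDist g h, Finset.mem_range.mpr (by omega), ?_⟩
    refine Finset.mem_biUnion.mpr ⟨univ.filter (fun j => g j ≠ h j), ?_, ?_⟩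
    · rw [Finset.mem_powersetCard]
      exact ⟨Finset.subset_univ _, rfl⟩
    · rw [Fintype.mem_piFinset]
      intro j
      by_cases hj : g j = h j
      · simp [hj]
      · simp [hj]
  calc (univ.filter fun g : Fin n → Fin 3 => hammingDist g h ≤ r).card
      ≤ _ := Finset.card_le_card hsub
    _ ≤ ∑ d ∈ range (r+1), ((univ.powersetCard d).biUnion
        (fun D => Fintype.piFinset fun j => if j ∈ D then ({h j}ᶜ : Finset (Fin 3)) else {h j})).card :=
        Finset.card_biUnion_le
    _ ≤ ∑ d ∈ range (r+1), n.choose d * 2^d := by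
        apply Finset.sum_le_sum
        intro d _
        calc ((univ.powersetCard d).biUnion (fun D => Fintype.piFinset
              fun j => if j ∈ D then ({h j}ᶜ : Finset (Fin 3)) else {h j})).card
            ≤ ∑ D ∈ univ.powersetCard d, (Fintype.piFinset
              fun j => if j ∈ D then ({h j}ᶜ : Finset (Fin 3)) else {h j}).card :=
              Finset.card_biUnion_le
          _ = ∑ D ∈ univ.powersetCard d, 2^d := by
              apply Finset.sum_congr rfl
              intro D hD
              rw [Finset.mem_powersetCard] at hD
              rw [card_pattern, hD.2]
          _ = n.choose d * 2^d := by
              rw [Finset.sum_const, Finset.card_powersetCard, Finset.card_univ,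
                Fintype.card_fin, smul_eq_mul]

private lemma Sk_lower {n k : ℕ} (hkn : k ≤ n) :
    n.choose k * 2^k ≤ (univ.filter fun g : Fin n → Fin 3 =>
      (univ.filter fun j => g j ≠ 1).card = k).card := by
  set Sk := univ.filter fun g : Fin n → Fin 3 => (univ.filter fun j => g j ≠ 1).card = k with hSk
  have hmem : ∀ (D : Finset (Fin n)) (g : Fin n → Fin 3),
      g ∈ (Fintype.piFinset fun j => if j ∈ D then ({(1 : Fin 3)}ᶜ : Finset (Fin 3)) else {1}) →
      (univ.filter fun j => g j ≠ 1) = D := by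
    intro D g hg
    rw [Fintype.mem_piFinset] at hg
    ext j
    specialize hg j
    by_cases hj : j ∈ D
    · simp only [hj, if_pos] at hg
      simp only [Finset.mem_compl, Finset.mem_singleton] at hg
      simp [hj, hg]
    · simp only [hj, if_neg, not_false_iff] at hg
      simp only [Finset.mem_singleton] at hg
      simp [hj, hg]
  have hsub : (univ.powersetCard k).biUnion (fun D => Fintype.piFinset
      fun j => if j ∈ D then ({(1 : Fin 3)}ᶜ : Finset (Fin 3)) else {1}) ⊆ Sk := by
    intro g hg
    rw [Finset.mem_biUnion] at hg
    obtain ⟨D, hD, hgD⟩ := hg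
    rw [Finset.mem_powersetCard] at hD
    rw [hSk, Finset.mem_filter]
    exact ⟨Finset.mem_univ _, by rw [hmem D g hgD, hD.2]⟩
  have hdisj : ∀ D₁ ∈ (univ : Finset (Fin n)).powersetCard k, ∀ D₂ ∈ (univ : Finset (Fin n)).powersetCard k, D₁ ≠ D₂ →
      Disjoint (Fintype.piFinset fun j => if j ∈ D₁ then ({(1 : Fin 3)}ᶜ : Finset (Fin 3)) else {1})
        (Fintype.piFinset fun j => if j ∈ D₂ then ({(1 : Fin 3)}ᶜ : Finset (Fin 3)) else {1}) := by
    intro D₁ _ D₂ _ hne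
    rw [Finset.disjoint_left]
    intro g hg1 hg2
    exact hne ((hmem D₁ g hg1).symm.trans (hmem D₂ g hg2))
  calc n.choose k * 2^k
      = ∑ D ∈ (univ : Finset (Fin n)).powersetCard k, 2^k := by
        rw [Finset.sum_const, Finset.card_powersetCard, Finset.card_univ,
          Fintype.card_fin, smul_eq_mul]
    _ = ∑ D ∈ univ.powersetCard k, (Fintype.piFinset
        fun j => if j ∈ D then ({(1 : Fin 3)}ᶜ : Finset (Fin 3)) else {1}).card := by
        apply Finset.sum_congr rfl
        intro D hD
        rw [Finset.mem_powersetCard] at hD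
        rw [card_pattern, hD.2]
    _ = ((univ.powersetCard k).biUnion (fun D => Fintype.piFinset
        fun j => if j ∈ D then ({(1 : Fin 3)}ᶜ : Finset (Fin 3)) else {1})).card :=
        (Finset.card_biUnion hdisj).symm
    _ ≤ Sk.card := Finset.card_le_card hsub

private lemma iota_vals : ∀ v : Fin 3, iota v = -1 ∨ iota v = 0 ∨ iota v = 1 := by decide

private lemma iota_ne_zero : ∀ v : Fin 3, (iota v ≠ 0) ↔ v ≠ 1 := by decide

private lemma dist_comp {n : ℕ} (g g' : Fin n → Fin 3) :
    hammingDist (fun j => iota (g j)) (fun j => iota (g' j)) = hammingDist g g' := by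
  show (univ.filter fun j => iota (g j) ≠ iota (g' j)).card
      = (univ.filter fun j => g j ≠ g' j).card
  congr 1
  apply Finset.filter_congr
  intro j _
  constructor
  · intro hne heq; exact hne (by rw [heq])
  · intro hne heq; exact hne (iota_inj heq)

/-- (Varshamov–Gilbert type construction.) For `p ≥ 2` and
`1 ≤ k ≤ p−1`, there is a subset `H̃_k` of `{β ∈ {−1,0,1}^{p−1} : ‖β‖₀ = k}` of
cardinality at least `exp((k/2) log((p − k/2 − 1)/k))` whose distinct elements are at
pairwise Hamming distance at least `k/2`. -/
theorem sparse_hypercube_packing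
    (p k : ℕ) (hp : 2 ≤ p) (hk1 : 1 ≤ k) (hk : k ≤ p - 1) :
    ∃ H : Finset (Fin (p - 1) → ℤ),
      (∀ β ∈ H, (∀ j, β j = -1 ∨ β j = 0 ∨ β j = 1) ∧
        (Finset.univ.filter fun j => β j ≠ 0).card = k) ∧
      Real.exp (((k : ℝ) / 2) * Real.log (((p : ℝ) - (k : ℝ) / 2 - 1) / k)) ≤ H.card ∧
      ∀ β ∈ H, ∀ β' ∈ H, β ≠ β' → (k : ℝ) / 2 ≤ (hammingDist β β' : ℝ) := by
  classical
  set n : ℕ := p - 1 with hn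
  have hkn : k ≤ n := hk
  have hn1 : 1 ≤ n := le_trans hk1 hkn
  have hpn : (p : ℝ) = (n : ℝ) + 1 := by
    have : p = n + 1 := by omega
    rw [this]; push_cast; ring
  have hxarg : ((p : ℝ) - (k : ℝ) / 2 - 1) / k = ((n : ℝ) - (k : ℝ) / 2) / k := by
    rw [hpn]; ring_nf
  rw [hxarg]
  set Sk : Finset (Fin n → Fin 3) := univ.filter fun g : Fin n → Fin 3 =>
    (univ.filter fun j => g j ≠ 1).card = k with hSkdef
  have hSkcard : n.choose k * 2^k ≤ Sk.card := Sk_lower hkn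
  have hSkpos : 0 < Sk.card := by
    have h1 : 0 < n.choose k := Nat.choose_pos hkn
    have h2 : 0 < 2^k := Nat.pow_pos (by norm_num)
    calc 0 < n.choose k * 2^k := Nat.mul_pos h1 h2
      _ ≤ Sk.card := hSkcard
  have hSkne : Sk.Nonempty := Finset.card_pos.mp hSkpos
  -- membership translation
  have hmem_trans : ∀ g ∈ Sk, (∀ j, iota (g j) = -1 ∨ iota (g j) = 0 ∨ iota (g j) = 1) ∧
      (Finset.univ.filter fun j => iota (g j) ≠ 0).card = k := by
    intro g hg
    rw [hSkdef, Finset.mem_filter] at hg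
    refine ⟨fun j => iota_vals (g j), ?_⟩
    have : (Finset.univ.filter fun j => iota (g j) ≠ 0)
        = (Finset.univ.filter fun j => g j ≠ 1) := by
      apply Finset.filter_congr
      intro j _
      exact iota_ne_zero (g j)
    rw [this, hg.2]
  have hcomp_inj : Function.Injective (fun (g : Fin n → Fin 3) => (fun j => iota (g j) : Fin n → ℤ)) := by
    intro g g' hgg'
    funext j
    exact iota_inj (congrFun hgg' j)
  rcases le_or_gt (2*n) (3*k) with h32 | h32
  · -- trivial case: singleton
    obtain ⟨g₀, hg₀⟩ := hSkne
    refine ⟨{fun j => iota (g₀ j)}, ?_, ?_, ?_⟩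
    · intro β hβ
      rw [Finset.mem_singleton] at hβ
      subst hβ
      exact hmem_trans g₀ hg₀
    · rw [Finset.card_singleton]
      have hx0 : (0:ℝ) ≤ ((n : ℝ) - (k : ℝ) / 2) / k := by
        apply div_nonneg _ (by positivity)
        have : (k:ℝ) ≤ n := by exact_mod_cast hkn
        linarith
      have hx1 : ((n : ℝ) - (k : ℝ) / 2) / k ≤ 1 := by
        rw [div_le_one (by exact_mod_cast hk1 : (0:ℝ) < k)]
        have : (2*n : ℝ) ≤ 3*k := by exact_mod_cast h32
        linarith
      have hlog : Real.log (((n : ℝ) - (k : ℝ) / 2) / k) ≤ 0 := Real.log_nonpos hx0 hx1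
      have : ((k : ℝ) / 2) * Real.log (((n : ℝ) - (k : ℝ) / 2) / k) ≤ 0 :=
        mul_nonpos_of_nonneg_of_nonpos (by positivity) hlog
      calc Real.exp _ ≤ Real.exp 0 := Real.exp_le_exp.mpr this
        _ = 1 := Real.exp_zero
        _ ≤ ((1:ℕ):ℝ) := by norm_num
    · intro β hβ β' hβ' hne
      rw [Finset.mem_singleton] at hβ hβ'
      exact absurd (hβ.trans hβ'.symm) hne
  · -- main case
    have h3 : 3*k + 1 ≤ 2*n := by omega
    set r : ℕ := (k-1)/2 with hr
    set 𝒜 : Finset (Finset (Fin n → Fin 3)) := Sk.powerset.filter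
      (fun A => ∀ a ∈ A, ∀ b ∈ A, a ≠ b → r + 1 ≤ hammingDist a b) with h𝒜
    have h𝒜ne : 𝒜.Nonempty := by
      refine ⟨∅, ?_⟩
      rw [h𝒜, Finset.mem_filter]
      exact ⟨Finset.empty_mem_powerset _, by simp⟩
    obtain ⟨H₀, hH₀mem, hmax⟩ := Finset.exists_max_image 𝒜 Finset.card h𝒜ne
    rw [h𝒜, Finset.mem_filter, Finset.mem_powerset] at hH₀mem
    obtain ⟨hH₀sub, hH₀sep⟩ := hH₀mem
    -- covering
    have hcover : ∀ g ∈ Sk, ∃ h ∈ H₀, hammingDist g h ≤ r := by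
      intro g hg
      by_cases hgH : g ∈ H₀
      · exact ⟨g, hgH, by rw [hammingDist_self]; omega⟩
      · by_contra hcon
        push_neg at hcon
        have hsep' : ∀ h ∈ H₀, r + 1 ≤ hammingDist g h := by
          intro h hh
          have := hcon h hh
          omega
        have hins : insert g H₀ ∈ 𝒜 := by
          rw [h𝒜, Finset.mem_filter, Finset.mem_powerset]
          constructor
          · rw [Finset.insert_subset_iff]; exact ⟨hg, hH₀sub⟩
          · intro a ha b hb hab
            rw [Finset.mem_insert] at ha hb
            rcases ha with ha | ha <;> rcases hb with hb | hb
            · exact absurd (ha.trans hb.symm) hab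
            · subst ha; exact hsep' b hb
            · subst hb; rw [hammingDist_comm]; exact hsep' a ha
            · exact hH₀sep a ha b hb hab
        have := hmax _ hins
        rw [Finset.card_insert_of_notMem hgH] at this
        omega
    -- counting
    set Vn : ℕ := ∑ d ∈ range (r+1), n.choose d * 2^d with hVn
    have hcount : Sk.card ≤ H₀.card * Vn := by
      have hsub2 : Sk ⊆ H₀.biUnion (fun h => univ.filter fun g => hammingDist g h ≤ r) := by
        intro g hg
        obtain ⟨h, hh, hdist⟩ := hcover g hg
        rw [Finset.mem_biUnion]
        exact ⟨h, hh, by rw [Finset.mem_filter]; exact ⟨Finset.mem_univ _, hdist⟩⟩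
      calc Sk.card ≤ _ := Finset.card_le_card hsub2
        _ ≤ ∑ h ∈ H₀, (univ.filter fun g => hammingDist g h ≤ r).card := Finset.card_biUnion_le
        _ ≤ ∑ h ∈ H₀, Vn := Finset.sum_le_sum (fun h _ => ball_bound h r)
        _ = H₀.card * Vn := by rw [Finset.sum_const, smul_eq_mul]
    have hVnpos : 0 < Vn := by
      rw [hVn]
      apply Finset.sum_pos'
      · intro i _; exact Nat.zero_le _
      · exact ⟨0, Finset.mem_range.mpr (by omega), by simp⟩
    -- real inequality
    have hkey := key_numeric hk1 hkn h3
    have hchain : Real.exp (((k:ℝ)/2) * Real.log (((n:ℝ) - (k:ℝ)/2)/k)) * (Vn : ℝ)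
        ≤ (H₀.card : ℝ) * (Vn : ℝ) := by
      have hcast : (Vn : ℝ) = ∑ d ∈ range ((k-1)/2 + 1), ((n.choose d : ℝ) * 2^d) := by
        rw [hVn, ← hr]; push_cast; ring_nf
      have h1 : Real.exp (((k:ℝ)/2) * Real.log (((n:ℝ) - (k:ℝ)/2)/k)) * (Vn : ℝ)
          ≤ 2^k * (n.choose k : ℝ) := by rw [hcast]; exact hkey
      have h2 : (2:ℝ)^k * (n.choose k : ℝ) ≤ (H₀.card : ℝ) * (Vn : ℝ) := by
        have : n.choose k * 2^k ≤ H₀.card * Vn := le_trans hSkcard hcount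
        calc (2:ℝ)^k * (n.choose k : ℝ) = ((n.choose k * 2^k : ℕ) : ℝ) := by push_cast; ring
          _ ≤ ((H₀.card * Vn : ℕ) : ℝ) := by exact_mod_cast this
          _ = (H₀.card : ℝ) * (Vn : ℝ) := by push_cast; ring
      linarith
    have hNle : Real.exp (((k:ℝ)/2) * Real.log (((n:ℝ) - (k:ℝ)/2)/k)) ≤ (H₀.card : ℝ) := by
      have hVnR : (0:ℝ) < (Vn : ℝ) := by exact_mod_cast hVnpos
      exact le_of_mul_le_mul_right hchain hVnR
    -- final set
    refine ⟨H₀.image (fun g => (fun j => iota (g j) : Fin n → ℤ)), ?_, ?_, ?_⟩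
    · intro β hβ
      rw [Finset.mem_image] at hβ
      obtain ⟨g, hg, rfl⟩ := hβ
      exact hmem_trans g (hH₀sub hg)
    · rw [Finset.card_image_of_injective _ hcomp_inj]
      exact hNle
    · intro β hβ β' hβ' hne
      rw [Finset.mem_image] at hβ hβ'
      obtain ⟨g, hg, rfl⟩ := hβ
      obtain ⟨g', hg', rfl⟩ := hβ'
      have hgne : g ≠ g' := fun h => hne (by rw [h])
      have hd := hH₀sep g hg g' hg' hgne
      rw [dist_comp]
      have : ((r:ℝ) + 1) ≤ (hammingDist g g' : ℝ) := by exact_mod_cast hd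
      have hrk : (k:ℝ) ≤ 2*((r:ℝ)+1) := by
        have : k ≤ 2*(r+1) := by omega
        exact_mod_cast this
      linarith
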